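/- Let ξ ∈ ℝ³ and let ψ, Φ : ℝ³ → ℝ be three times continuously differentiable. Assume that for every x ∈ ℝ³ the gradient ∇ψ(x) is parallel to ξ (i.e. ∇ψ(x) = (ξ·∇ψ(x)/|ξ|²) ξ, equivalently v·∇ψ(x) = 0 for all v ⟂ ξ) and that ξ·∇Φ(x) = 0 for every x ∈ ℝ³. Then the vector field V = ψ Φ ξ satisfies, at every point x, curl curl V = ψ (−ΔΦ) ξ + ∇ψ × curl(Φ ξ). In particular, the vector field W + W^{(c)}, where W := ψ (−ΔΦ) ξ and W^{(c)} := ∇ψ × curl(Φ ξ), is divergence-free: div(W + W^{(c)}) = 0 everywhere. -/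

import Mathlib

noncomputable section

open scoped BigOperators

/-- The `i`-th partial derivative of a scalar function on `ℝ³`. -/
def pd (i : Fin 3) (f : (Fin 3 → ℝ) → ℝ) (x : Fin 3 → ℝ) : ℝ :=
  fderiv ℝ f x (Pi.single i 1)

lemma pd_const (c : ℝ) (i : Fin 3) (x : Fin 3 → ℝ) : pd i (fun _ => c) x = 0 := by
  simp [pd]

lemma pd_add {f g : (Fin 3 → ℝ) → ℝ} {x : Fin 3 → ℝ} (hf : DifferentiableAt ℝ f x)
    (hg : DifferentiableAt ℝ g x) (i : Fin 3) :
    pd i (fun y => f y + g y) x = pd i f x + pd i g x := by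
  simp [pd, fderiv_fun_add hf hg]

lemma pd_sub {f g : (Fin 3 → ℝ) → ℝ} {x : Fin 3 → ℝ} (hf : DifferentiableAt ℝ f x)
    (hg : DifferentiableAt ℝ g x) (i : Fin 3) :
    pd i (fun y => f y - g y) x = pd i f x - pd i g x := by
  simp [pd, fderiv_fun_sub hf hg]

lemma pd_mul {f g : (Fin 3 → ℝ) → ℝ} {x : Fin 3 → ℝ} (hf : DifferentiableAt ℝ f x)
    (hg : DifferentiableAt ℝ g x) (i : Fin 3) :
    pd i (fun y => f y * g y) x = pd i f x * g x + f x * pd i g x := by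
  simp [pd, fderiv_fun_mul hf hg]; ring

lemma pd_mul_const {f : (Fin 3 → ℝ) → ℝ} {x : Fin 3 → ℝ} (hf : DifferentiableAt ℝ f x)
    (c : ℝ) (i : Fin 3) :
    pd i (fun y => f y * c) x = pd i f x * c := by
  simp [pd, fderiv_mul_const hf]; ring

lemma pd_const_mul {f : (Fin 3 → ℝ) → ℝ} {x : Fin 3 → ℝ} (hf : DifferentiableAt ℝ f x)
    (c : ℝ) (i : Fin 3) :
    pd i (fun y => c * f y) x = c * pd i f x := by
  simp [pd, fderiv_const_mul hf]

lemma contDiff_pd {n m : ℕ} {f : (Fin 3 → ℝ) → ℝ} (hf : ContDiff ℝ n f) (h : m + 1 ≤ n)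
    (i : Fin 3) : ContDiff ℝ m (fun x => pd i f x) := by
  have h1 : ContDiff ℝ m (fderiv ℝ f) := hf.fderiv_right (by exact_mod_cast h)
  exact h1.clm_apply contDiff_const

lemma pd_comm {f : (Fin 3 → ℝ) → ℝ} (hf : ContDiff ℝ 2 f) (i j : Fin 3) (x : Fin 3 → ℝ) :
    pd i (fun y => pd j f y) x = pd j (fun y => pd i f y) x := by
  have hs : IsSymmSndFDerivAt ℝ f x := hf.contDiffAt.isSymmSndFDerivAt (by norm_num)
  have hd : DifferentiableAt ℝ (fderiv ℝ f) x :=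
    (hf.fderiv_right (m := 1) (by norm_num)).differentiable (by norm_num) x
  have key : ∀ a b : Fin 3, pd a (fun y => pd b f y) x
      = fderiv ℝ (fderiv ℝ f) x (Pi.single a 1) (Pi.single b 1) := by
    intro a b
    simp only [pd]
    rw [fderiv_clm_apply hd (differentiableAt_const _)]
    simp
  rw [key, key, hs]

lemma pd_zero_fun {f : (Fin 3 → ℝ) → ℝ} (hf : ∀ y, f y = 0) (a : Fin 3) (x : Fin 3 → ℝ) :
    pd a f x = 0 := by
  have : f = fun _ => (0 : ℝ) := funext hf
  rw [this, pd_const]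

lemma parallel_of_orth (ξ u : Fin 3 → ℝ)
    (h : ∀ v : Fin 3 → ℝ, (∑ i, v i * ξ i) = 0 → ∑ i, v i * u i = 0) (j : Fin 3) :
    (ξ 0 * ξ 0 + ξ 1 * ξ 1 + ξ 2 * ξ 2) * u j
      = (ξ 0 * u 0 + ξ 1 * u 1 + ξ 2 * u 2) * ξ j := by
  set S := ξ 0 * ξ 0 + ξ 1 * ξ 1 + ξ 2 * ξ 2 with hS
  set T := ξ 0 * u 0 + ξ 1 * u 1 + ξ 2 * u 2 with hT
  have hv : (∑ i, (fun i => S * u i - T * ξ i) i * ξ i) = 0 := by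
    simp only [Fin.sum_univ_three, hS, hT]; ring
  have h2 := h (fun i => S * u i - T * ξ i) hv
  rw [Fin.sum_univ_three] at h2
  have hsum : (S * u 0 - T * ξ 0)^2 + (S * u 1 - T * ξ 1)^2 + (S * u 2 - T * ξ 2)^2 = 0 := by
    have hv' : (S * u 0 - T * ξ 0) * ξ 0 + (S * u 1 - T * ξ 1) * ξ 1
        + (S * u 2 - T * ξ 2) * ξ 2 = 0 := by rw [hS, hT]; ring
    linear_combination S * h2 - T * hv'
  have key : (S * u j - T * ξ j)^2 = 0 := by
    fin_cases j
    · show (S * u 0 - T * ξ 0)^2 = 0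
      nlinarith [sq_nonneg (S * u 1 - T * ξ 1), sq_nonneg (S * u 2 - T * ξ 2)]
    · show (S * u 1 - T * ξ 1)^2 = 0
      nlinarith [sq_nonneg (S * u 0 - T * ξ 0), sq_nonneg (S * u 2 - T * ξ 2)]
    · show (S * u 2 - T * ξ 2)^2 = 0
      nlinarith [sq_nonneg (S * u 0 - T * ξ 0), sq_nonneg (S * u 1 - T * ξ 1)]
  have := pow_eq_zero_iff (n := 2) (by norm_num) |>.mp key
  linarith [this]


/-- The gradient of a scalar function on `ℝ³`. -/
def grad (f : (Fin 3 → ℝ) → ℝ) (x : Fin 3 → ℝ) : Fin 3 → ℝ :=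
  fun i => pd i f x

/-- The Laplacian of a scalar function on `ℝ³`. -/
def lap (f : (Fin 3 → ℝ) → ℝ) (x : Fin 3 → ℝ) : ℝ :=
  ∑ i, pd i (fun y => pd i f y) x

/-- The curl of a vector field on `ℝ³`. -/
def curl (F : (Fin 3 → ℝ) → (Fin 3 → ℝ)) (x : Fin 3 → ℝ) : Fin 3 → ℝ :=
  ![pd 1 (fun y => F y 2) x - pd 2 (fun y => F y 1) x,
    pd 2 (fun y => F y 0) x - pd 0 (fun y => F y 2) x,
    pd 0 (fun y => F y 1) x - pd 1 (fun y => F y 0) x]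

/-- The divergence of a vector field on `ℝ³`. -/
def div3 (F : (Fin 3 → ℝ) → (Fin 3 → ℝ)) (x : Fin 3 → ℝ) : ℝ :=
  ∑ i, pd i (fun y => F y i) x

/-- The cross product in `ℝ³`. -/
def cross3 (a b : Fin 3 → ℝ) : Fin 3 → ℝ :=
  ![a 1 * b 2 - a 2 * b 1, a 2 * b 0 - a 0 * b 2, a 0 * b 1 - a 1 * b 0]

/-- **The incompressibility corrector identity for intermittent jets.** If `∇ψ` is
everywhere parallel to `ξ` (i.e. `v·∇ψ = 0` for all `v ⟂ ξ`) and `ξ·∇Φ = 0`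
everywhere, then `curl curl (ψΦξ) = ψ(−ΔΦ)ξ + ∇ψ × curl(Φξ)`; in particular
`W + W^{(c)}` with `W = ψ(−ΔΦ)ξ` and `W^{(c)} = ∇ψ × curl(Φξ)` is divergence-free. -/
theorem curl_curl_intermittent_jet
    (ξ : Fin 3 → ℝ) (ψ Φ : (Fin 3 → ℝ) → ℝ)
    (hψ : ContDiff ℝ 3 ψ) (hΦ : ContDiff ℝ 3 Φ)
    (hψpar : ∀ x : Fin 3 → ℝ, ∀ v : Fin 3 → ℝ,
      (∑ i, v i * ξ i) = 0 → (∑ i, v i * pd i ψ x) = 0)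
    (hΦperp : ∀ x : Fin 3 → ℝ, ∑ i, ξ i * pd i Φ x = 0) :
    (∀ x : Fin 3 → ℝ, ∀ i : Fin 3,
      curl (fun y => curl (fun z => fun j => ψ z * Φ z * ξ j) y) x i =
        ψ x * (-(lap Φ x)) * ξ i +
          cross3 (grad ψ x) (curl (fun z => fun j => Φ z * ξ j) x) i) ∧
    (∀ x : Fin 3 → ℝ,
      div3 (fun y => fun i =>
        ψ y * (-(lap Φ y)) * ξ i +
          cross3 (grad ψ y) (curl (fun z => fun j => Φ z * ξ j) y) i) x = 0) := by
  have hψ2 : ContDiff ℝ 2 ψ := hψ.of_le (by norm_num)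
  have hΦ2 : ContDiff ℝ 2 Φ := hΦ.of_le (by norm_num)
  have dψ : ∀ y, DifferentiableAt ℝ ψ y := fun y =>
    (hψ.differentiable (by norm_num)).differentiableAt
  have dΦ : ∀ y, DifferentiableAt ℝ Φ y := fun y =>
    (hΦ.differentiable (by norm_num)).differentiableAt
  have hg : ContDiff ℝ 3 (fun z => ψ z * Φ z) := hψ.mul hΦ
  have hg2 : ContDiff ℝ 2 (fun z => ψ z * Φ z) := hg.of_le (by norm_num)
  have dg : ∀ y, DifferentiableAt ℝ (fun z => ψ z * Φ z) y := fun y =>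
    (hg.differentiable (by norm_num)).differentiableAt
  have dpg : ∀ (b : Fin 3) (y), DifferentiableAt ℝ (fun y => pd b (fun z => ψ z * Φ z) y) y :=
    fun b y => ((contDiff_pd hg (n := 3) (m := 2) (by norm_num) b).differentiable
      (by norm_num)).differentiableAt
  have dpψ : ∀ (b : Fin 3) (y), DifferentiableAt ℝ (fun y => pd b ψ y) y :=
    fun b y => ((contDiff_pd hψ (n := 3) (m := 2) (by norm_num) b).differentiable
      (by norm_num)).differentiableAt
  have dpΦ : ∀ (b : Fin 3) (y), DifferentiableAt ℝ (fun y => pd b Φ y) y :=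
    fun b y => ((contDiff_pd hΦ (n := 3) (m := 2) (by norm_num) b).differentiable
      (by norm_num)).differentiableAt
  -- pointwise product-rule rewrites
  have hgc : ∀ (k : Fin 3) (c : ℝ) (y), pd k (fun z => ψ z * Φ z * c) y
      = pd k (fun z => ψ z * Φ z) y * c := fun k c y => pd_mul_const (dg y) c k
  have hΦc : ∀ (k : Fin 3) (c : ℝ) (y), pd k (fun z => Φ z * c) y = pd k Φ y * c :=
    fun k c y => pd_mul_const (dΦ y) c k
  have hE : ∀ (a b : Fin 3) (x), pd a (fun y => pd b (fun z => ψ z * Φ z) y) x =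
      pd a (fun y => pd b ψ y) x * Φ x + pd b ψ x * pd a Φ x + pd a ψ x * pd b Φ x
        + ψ x * pd a (fun y => pd b Φ y) x := by
    intro a b x
    have h1 : (fun y => pd b (fun z => ψ z * Φ z) y)
        = (fun y => pd b ψ y * Φ y + ψ y * pd b Φ y) :=
      funext fun y => pd_mul (dψ y) (dΦ y) b
    rw [h1, pd_add ((dpψ b x).fun_mul (dΦ x)) ((dψ x).fun_mul (dpΦ b x)),
      pd_mul (dpψ b x) (dΦ x), pd_mul (dψ x) (dpΦ b x)]
    ring
  have hstep : ∀ (a b d : Fin 3) (c e : ℝ) (x),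
      pd a (fun y => pd b (fun z => ψ z * Φ z) y * c - pd d (fun z => ψ z * Φ z) y * e) x
        = pd a (fun y => pd b (fun z => ψ z * Φ z) y) x * c
          - pd a (fun y => pd d (fun z => ψ z * Φ z) y) x * e := by
    intro a b d c e x
    rw [pd_sub ((dpg b x).mul_const c) ((dpg d x).mul_const e),
      pd_mul_const (dpg b x), pd_mul_const (dpg d x)]
  -- the basic pointwise facts
  have hF1 : ∀ x, ξ 0 * pd 0 Φ x + ξ 1 * pd 1 Φ x + ξ 2 * pd 2 Φ x = 0 := by
    intro x; have := hΦperp x; rwa [Fin.sum_univ_three] at this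
  have hF3 : ∀ x, pd 0 Φ x * pd 0 ψ x + pd 1 Φ x * pd 1 ψ x + pd 2 Φ x * pd 2 ψ x = 0 := by
    intro x
    have h := hψpar x (fun i => pd i Φ x) (by
      rw [Fin.sum_univ_three]; linarith [hF1 x])
    rw [Fin.sum_univ_three] at h
    simpa using h
  have hF2 : ∀ (a : Fin 3) (x), ξ 0 * pd a (fun y => pd 0 Φ y) x
      + ξ 1 * pd a (fun y => pd 1 Φ y) x + ξ 2 * pd a (fun y => pd 2 Φ y) x = 0 := by
    intro a x
    have hz : pd a (fun y => ξ 0 * pd 0 Φ y + ξ 1 * pd 1 Φ y + ξ 2 * pd 2 Φ y) x = 0 :=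
      pd_zero_fun hF1 a x
    rw [pd_add (((dpΦ 0 x).const_mul (ξ 0)).fun_add ((dpΦ 1 x).const_mul (ξ 1)))
        ((dpΦ 2 x).const_mul (ξ 2)),
      pd_add ((dpΦ 0 x).const_mul (ξ 0)) ((dpΦ 1 x).const_mul (ξ 1)),
      pd_const_mul (dpΦ 0 x), pd_const_mul (dpΦ 1 x), pd_const_mul (dpΦ 2 x)] at hz
    linarith [hz]
  have hrow : ∀ (a : Fin 3) (x) (j : Fin 3),
      (ξ 0 * ξ 0 + ξ 1 * ξ 1 + ξ 2 * ξ 2) * pd j (fun y => pd a ψ y) x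
        = (ξ 0 * pd 0 (fun y => pd a ψ y) x + ξ 1 * pd 1 (fun y => pd a ψ y) x
            + ξ 2 * pd 2 (fun y => pd a ψ y) x) * ξ j := by
    intro a x j
    have horth : ∀ v : Fin 3 → ℝ, (∑ i, v i * ξ i) = 0 →
        ∑ i, v i * (fun j => pd j (fun y => pd a ψ y) x) i = 0 := by
      intro v hv
      have h0 : ∀ y, v 0 * pd 0 ψ y + v 1 * pd 1 ψ y + v 2 * pd 2 ψ y = 0 := by
        intro y; have := hψpar y v hv; rwa [Fin.sum_univ_three] at this
      have hz : pd a (fun y => v 0 * pd 0 ψ y + v 1 * pd 1 ψ y + v 2 * pd 2 ψ y) x = 0 :=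
        pd_zero_fun h0 a x
      rw [pd_add (((dpψ 0 x).const_mul (v 0)).fun_add ((dpψ 1 x).const_mul (v 1)))
          ((dpψ 2 x).const_mul (v 2)),
        pd_add ((dpψ 0 x).const_mul (v 0)) ((dpψ 1 x).const_mul (v 1)),
        pd_const_mul (dpψ 0 x), pd_const_mul (dpψ 1 x), pd_const_mul (dpψ 2 x)] at hz
      rw [Fin.sum_univ_three]
      simp only
      rw [pd_comm hψ2 0 a x, pd_comm hψ2 1 a x, pd_comm hψ2 2 a x]
      linarith [hz]
    have := parallel_of_orth ξ (fun j => pd j (fun y => pd a ψ y) x) horth j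
    simpa using this
  have hF4 : ∀ (a : Fin 3) (x),
      ξ 0 * pd 0 (fun y => pd a ψ y) x + ξ 1 * pd 1 (fun y => pd a ψ y) x
        + ξ 2 * pd 2 (fun y => pd a ψ y) x
      = (pd 0 (fun y => pd 0 ψ y) x + pd 1 (fun y => pd 1 ψ y) x
          + pd 2 (fun y => pd 2 ψ y) x) * ξ a := by
    intro a x
    by_cases hS : ξ 0 * ξ 0 + ξ 1 * ξ 1 + ξ 2 * ξ 2 = 0
    · have h00 : ξ 0 = 0 := by nlinarith [sq_nonneg (ξ 0), sq_nonneg (ξ 1), sq_nonneg (ξ 2)]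
      have h01 : ξ 1 = 0 := by nlinarith [sq_nonneg (ξ 0), sq_nonneg (ξ 1), sq_nonneg (ξ 2)]
      have h02 : ξ 2 = 0 := by nlinarith [sq_nonneg (ξ 0), sq_nonneg (ξ 1), sq_nonneg (ξ 2)]
      have ha : ξ a = 0 := by fin_cases a <;> assumption
      rw [h00, h01, h02, ha]; ring
    · apply mul_left_cancel₀ hS
      linear_combination ξ 0 * hrow 0 x a + ξ 1 * hrow 1 x a + ξ 2 * hrow 2 x a
        - ξ a * hrow 0 x 0 - ξ a * hrow 1 x 1 - ξ a * hrow 2 x 2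
        + ((ξ 0 * ξ 0 + ξ 1 * ξ 1 + ξ 2 * ξ 2) * ξ 0) * pd_comm hψ2 0 a x
        + ((ξ 0 * ξ 0 + ξ 1 * ξ 1 + ξ 2 * ξ 2) * ξ 1) * pd_comm hψ2 1 a x
        + ((ξ 0 * ξ 0 + ξ 1 * ξ 1 + ξ 2 * ξ 2) * ξ 2) * pd_comm hψ2 2 a x
  have cppg : ∀ c : Fin 3, ContDiff ℝ 2 (fun y => pd c (fun z => ψ z * Φ z) y) :=
    fun c => contDiff_pd hg (n := 3) (m := 2) (by norm_num) c
  have dppg : ∀ (b c : Fin 3) (y : Fin 3 → ℝ),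
      DifferentiableAt ℝ (fun y => pd b (fun y' => pd c (fun z => ψ z * Φ z) y') y) y :=
    fun b c y => ((contDiff_pd (cppg c) (n := 2) (m := 1) (by norm_num) b).differentiable
      (by norm_num)).differentiableAt
  have hstep4 : ∀ (a b1 c1 b2 c2 b3 c3 b4 c4 : Fin 3) (e1 e2 e3 e4 : ℝ) (x : Fin 3 → ℝ),
      pd a (fun y =>
        pd b1 (fun y' => pd c1 (fun z => ψ z * Φ z) y') y * e1
          - pd b2 (fun y' => pd c2 (fun z => ψ z * Φ z) y') y * e2
          - (pd b3 (fun y' => pd c3 (fun z => ψ z * Φ z) y') y * e3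
            - pd b4 (fun y' => pd c4 (fun z => ψ z * Φ z) y') y * e4)) x
        = pd a (fun y => pd b1 (fun y' => pd c1 (fun z => ψ z * Φ z) y') y) x * e1
          - pd a (fun y => pd b2 (fun y' => pd c2 (fun z => ψ z * Φ z) y') y) x * e2
          - (pd a (fun y => pd b3 (fun y' => pd c3 (fun z => ψ z * Φ z) y') y) x * e3
            - pd a (fun y => pd b4 (fun y' => pd c4 (fun z => ψ z * Φ z) y') y) x * e4) := by
    intro a b1 c1 b2 c2 b3 c3 b4 c4 e1 e2 e3 e4 x
    rw [pd_sub (((dppg b1 c1 x).mul_const e1).fun_sub ((dppg b2 c2 x).mul_const e2))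
        (((dppg b3 c3 x).mul_const e3).fun_sub ((dppg b4 c4 x).mul_const e4)),
      pd_sub ((dppg b1 c1 x).mul_const e1) ((dppg b2 c2 x).mul_const e2),
      pd_sub ((dppg b3 c3 x).mul_const e3) ((dppg b4 c4 x).mul_const e4),
      pd_mul_const (dppg b1 c1 x), pd_mul_const (dppg b2 c2 x),
      pd_mul_const (dppg b3 c3 x), pd_mul_const (dppg b4 c4 x)]
  have main : ∀ x : Fin 3 → ℝ, ∀ i : Fin 3,
      curl (fun y => curl (fun z => fun j => ψ z * Φ z * ξ j) y) x i =
        ψ x * (-(lap Φ x)) * ξ i +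
          cross3 (grad ψ x) (curl (fun z => fun j => Φ z * ξ j) x) i := by
    intro x i
    fin_cases i
    · simp only [curl, cross3, grad, lap, Fin.sum_univ_three, Fin.zero_eta, Fin.mk_one,
        Fin.reduceFinMk, Fin.isValue, Matrix.cons_val_zero,
        Matrix.cons_val_one, Matrix.head_cons, Matrix.cons_val_two, Matrix.tail_cons]
      simp only [hgc, hΦc, hstep, hE]
      linear_combination ψ x * hF2 0 x + ψ x * ξ 1 * pd_comm hΦ2 1 0 x
        + ψ x * ξ 2 * pd_comm hΦ2 2 0 x + Φ x * hF4 0 x + pd 0 ψ x * hF1 x - ξ 0 * hF3 x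
    · simp only [curl, cross3, grad, lap, Fin.sum_univ_three, Fin.zero_eta, Fin.mk_one,
        Fin.reduceFinMk, Fin.isValue, Matrix.cons_val_zero,
        Matrix.cons_val_one, Matrix.head_cons, Matrix.cons_val_two, Matrix.tail_cons]
      simp only [hgc, hΦc, hstep, hE]
      linear_combination ψ x * hF2 1 x + ψ x * ξ 2 * pd_comm hΦ2 2 1 x
        + ψ x * ξ 0 * pd_comm hΦ2 0 1 x + Φ x * hF4 1 x + pd 1 ψ x * hF1 x - ξ 1 * hF3 x
    · simp only [curl, cross3, grad, lap, Fin.sum_univ_three, Fin.zero_eta, Fin.mk_one,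
        Fin.reduceFinMk, Fin.isValue, Matrix.cons_val_zero,
        Matrix.cons_val_one, Matrix.head_cons, Matrix.cons_val_two, Matrix.tail_cons]
      simp only [hgc, hΦc, hstep, hE]
      linear_combination ψ x * hF2 2 x + ψ x * ξ 0 * pd_comm hΦ2 0 2 x
        + ψ x * ξ 1 * pd_comm hΦ2 1 2 x + Φ x * hF4 2 x + pd 2 ψ x * hF1 x - ξ 2 * hF3 x
  refine ⟨main, ?_⟩
  intro x
  have hfun : (fun y => fun i =>
      ψ y * (-(lap Φ y)) * ξ i +
        cross3 (grad ψ y) (curl (fun z => fun j => Φ z * ξ j) y) i)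
      = (fun y => curl (fun y' => curl (fun z => fun j => ψ z * Φ z * ξ j) y') y) := by
    funext y i
    exact (main y i).symm
  rw [hfun]
  simp only [div3, Fin.sum_univ_three, curl, Matrix.cons_val_zero, Matrix.cons_val_one,
    Matrix.head_cons, Matrix.cons_val_two, Matrix.tail_cons]
  simp only [hgc, hstep, hstep4]
  linear_combination ξ 1 * pd_comm (cppg 0) 0 1 x - ξ 0 * pd_comm (cppg 1) 0 1 x
    - ξ 0 * pd_comm (cppg 2) 0 2 x + ξ 2 * pd_comm (cppg 0) 0 2 x
    + ξ 2 * pd_comm (cppg 1) 1 2 x - ξ 1 * pd_comm (cppg 2) 1 2 x
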